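/- Let k ≥ 1 and n be integers with 2k + 1 ≤ n ≤ 2k + 3. There exists a constant C = C(n, k) > 0 such that for all real numbers 0 < δ < 1 and 0 < μ ≤ 𝔠_{n,k}^{−3/2} δ³, for every integer 0 ≤ j ≤ 2k, and for every x ∈ ℝⁿ with 3δ/4 ≤ |x| ≤ 9δ/4, the j-th iterated Fréchet derivative of the function f(y) := (μ² + 𝔠_{n,k}^{−1}|y|²)^{(2k−n)/2} − 𝔠_{n,k}^{(n−2k)/2}|y|^{2k−n} (which is smooth on ℝⁿ ∖ {0}) satisfies ‖D^j f(x)‖ ≤ C · δ^{−j}. -/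

import Mathlib

open MeasureTheory Real

/-- The constant `𝔠_{n,k} := (∏_{j=-k}^{k-1} (n+2j))^{1/k}` (reindexed by `j ↦ j - k`). -/
noncomputable def cnk (n k : ℕ) : ℝ :=
  (∏ j ∈ Finset.range (2 * k), ((n : ℝ) + 2 * j - 2 * k)) ^ ((k : ℝ)⁻¹)


section Helpers

variable {E : Type*} [NormedAddCommGroup E] [NormedSpace ℝ E]

private lemma idD1 (z : E) : ‖iteratedFDeriv ℝ 1 (fun y : E => y) z‖ ≤ 1 := by
  rw [show (1 : ℕ) = 0 + 1 from rfl, ← norm_iteratedFDeriv_fderiv, norm_iteratedFDeriv_zero,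
    fderiv_id']
  exact ContinuousLinearMap.norm_id_le

private lemma idD2 (z : E) {a : ℕ} (ha : 2 ≤ a) :
    ‖iteratedFDeriv ℝ a (fun y : E => y) z‖ = 0 := by
  obtain ⟨m, rfl⟩ : ∃ m, a = m + 1 := ⟨a - 1, by omega⟩
  rw [← norm_iteratedFDeriv_fderiv]
  have h : (fderiv ℝ (fun y : E => y)) = fun _ : E => ContinuousLinearMap.id ℝ E :=
    funext fun _ => fderiv_id'
  rw [h, iteratedFDeriv_const_of_ne (by omega)]; simp

end Helpers

section QBound

variable {E : Type*} [NormedAddCommGroup E] [InnerProductSpace ℝ E]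

private lemma qbound (z : E) (hz : ‖z‖ ≤ 9 / 4) (i : ℕ) (hi : 1 ≤ i) :
    ‖iteratedFDeriv ℝ i (fun y : E => ‖y‖ ^ 2) z‖ ≤ (5 : ℝ) ^ i := by
  have hfun : (fun y : E => ‖y‖ ^ 2) =
      fun y : E => (innerSL ℝ (E := E)) ((fun w : E => w) y) ((fun w : E => w) y) :=
    funext fun y => (real_inner_self_eq_norm_sq y).symm
  rw [hfun]
  have key := (innerSL ℝ (E := E)).norm_iteratedFDeriv_le_of_bilinear_of_le_one
    (f := fun w : E => w) (g := fun w : E => w) (N := ((⊤ : ℕ∞) : WithTop ℕ∞))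
    contDiff_id contDiff_id z (n := i) (by exact_mod_cast le_top) (norm_innerSL_le ℝ)
  refine key.trans ?_
  have h0 : ‖iteratedFDeriv ℝ 0 (fun y : E => y) z‖ = ‖z‖ := norm_iteratedFDeriv_zero
  have h1 := idD1 z
  have h1' : (0:ℝ) ≤ ‖iteratedFDeriv ℝ 1 (fun y : E => y) z‖ := norm_nonneg _
  have hz0 : (0:ℝ) ≤ ‖z‖ := norm_nonneg _
  rcases i with _ | _ | _ | m
  · omega
  · -- i = 1
    rw [Finset.sum_range_succ, Finset.sum_range_succ, Finset.sum_range_zero]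
    norm_num [h0]
    have hid : ‖ContinuousLinearMap.id ℝ E‖ ≤ 1 := ContinuousLinearMap.norm_id_le
    have h1'' : ‖iteratedFDeriv ℝ (0 + 1 - 0) (fun w : E => w) z‖ ≤ 1 := h1
    nlinarith [norm_nonneg (ContinuousLinearMap.id ℝ E), norm_nonneg (iteratedFDeriv ℝ (0 + 1 - 0) (fun w : E => w) z)]
  · -- i = 2
    rw [Finset.sum_range_succ, Finset.sum_range_succ, Finset.sum_range_succ,
      Finset.sum_range_zero]
    rw [show (2:ℕ) - 0 = 2 from rfl, show (2:ℕ) - 1 = 1 from rfl, show (2:ℕ) - 2 = 0 from rfl]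
    rw [idD2 z (le_refl 2), h0]
    norm_num
    have hid : ‖ContinuousLinearMap.id ℝ E‖ ≤ 1 := ContinuousLinearMap.norm_id_le
    nlinarith [norm_nonneg (ContinuousLinearMap.id ℝ E)]
  · -- i = m + 3
    have : ∀ a ∈ Finset.range (m + 3 + 1),
        ((m+3).choose a : ℝ) * ‖iteratedFDeriv ℝ a (fun y : E => y) z‖ *
          ‖iteratedFDeriv ℝ (m + 3 - a) (fun y : E => y) z‖ = 0 := by
      intro a ha
      rcases le_or_gt 2 a with h | h
      · rw [idD2 z h]; ring
      · rw [idD2 z (show 2 ≤ m + 3 - a by omega)]; ring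
    rw [Finset.sum_eq_zero this]
    positivity

end QBound

private lemma iterDeriv_formula (e u s w p : ℝ) (hu : 0 ≤ u) (hs : 0 < s) (i : ℕ) :
    ∀ t ∈ Set.Ioi (0:ℝ),
      iteratedDerivWithin i (fun t => e * ((u + s * t) ^ p - w * t ^ p)) (Set.Ioi 0) t
        = e * (∏ l ∈ Finset.range i, (p - l)) *
            (s ^ i * (u + s * t) ^ (p - i) - w * t ^ (p - i)) := by
  induction i with
  | zero =>
    intro t ht
    simp
  | succ i IH =>
    intro t ht
    have ht' : (0:ℝ) < t := ht
    have hpos : 0 < u + s * t := add_pos_of_nonneg_of_pos hu (mul_pos hs ht')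
    rw [iteratedDerivWithin_succ]
    rw [derivWithin_congr IH (IH t ht)]
    have h0 : HasDerivAt (fun t : ℝ => u + s * t) s t := by
      simpa using ((hasDerivAt_id t).const_mul s).const_add u
    have H1 : HasDerivAt (fun t : ℝ => (u + s * t) ^ (p - (i:ℝ)))
        (s * (p - i) * (u + s * t) ^ (p - (i:ℝ) - 1)) t :=
      h0.rpow_const (Or.inl hpos.ne')
    have H2 : HasDerivAt (fun t : ℝ => t ^ (p - (i:ℝ)))
        (1 * (p - i) * t ^ (p - (i:ℝ) - 1)) t :=
      (hasDerivAt_id t).rpow_const (Or.inl ht'.ne')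
    have H : HasDerivAt (fun t : ℝ => e * (∏ l ∈ Finset.range i, (p - (l:ℝ))) *
        (s ^ i * (u + s * t) ^ (p - (i:ℝ)) - w * t ^ (p - (i:ℝ))))
        (e * (∏ l ∈ Finset.range i, (p - (l:ℝ))) *
          (s ^ i * (s * (p - i) * (u + s * t) ^ (p - (i:ℝ) - 1)) -
            w * (1 * (p - i) * t ^ (p - (i:ℝ) - 1)))) t :=
      ((H1.const_mul (s ^ i)).sub (H2.const_mul w)).const_mul _
    rw [H.hasDerivWithinAt.derivWithin (isOpen_Ioi.uniqueDiffWithinAt ht)]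
    rw [Finset.prod_range_succ]
    have e1 : p - ((i:ℕ)+1:ℕ) = p - (i:ℝ) - 1 := by push_cast; ring
    rw [e1]
    ring

private lemma abs_rpow_sub_rpow_le (u B q : ℝ) (hu : 0 ≤ u) (hB : 0 < B) (hq : q < 0) :
    |(u + B) ^ q - B ^ q| ≤ |q| * B ^ (q - 1) * u := by
  have hderiv : ∀ y ∈ Set.Ici B, HasDerivWithinAt (fun y : ℝ => y ^ q)
      (q * y ^ (q - 1)) (Set.Ici B) y := fun y hy =>
    (Real.hasDerivAt_rpow_const (Or.inl (hB.trans_le hy).ne')).hasDerivWithinAt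
  have hbound : ∀ y ∈ Set.Ici B, ‖q * y ^ (q - 1)‖ ≤ |q| * B ^ (q - 1) := by
    intro y hy
    have hy0 : 0 < y := hB.trans_le hy
    rw [Real.norm_eq_abs, abs_mul, abs_of_nonneg (Real.rpow_nonneg hy0.le _)]
    have : y ^ (q - 1) ≤ B ^ (q - 1) :=
      Real.rpow_le_rpow_of_nonpos hB hy (by linarith)
    exact mul_le_mul_of_nonneg_left this (abs_nonneg q)
  have hmem1 : B ∈ Set.Ici B := Set.self_mem_Ici
  have hmem2 : u + B ∈ Set.Ici B := by simp [Set.mem_Ici]; linarith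
  have := (convex_Ici B).norm_image_sub_le_of_norm_hasDerivWithin_le hderiv hbound hmem1 hmem2
  simpa [abs_of_nonneg hu] using this
set_option maxHeartbeats 1000000 in
theorem stmt17 (k n : ℕ) (hk : 1 ≤ k) (h1 : 2 * k + 1 ≤ n) (h2 : n ≤ 2 * k + 3) :
    ∃ C : ℝ, 0 < C ∧
      ∀ δ μ : ℝ, 0 < δ → δ < 1 → 0 < μ → μ ≤ cnk n k ^ (-(3 / 2 : ℝ)) * δ ^ 3 →
      ∀ j : ℕ, j ≤ 2 * k →
      ∀ x : EuclideanSpace ℝ (Fin n), 3 * δ / 4 ≤ ‖x‖ → ‖x‖ ≤ 9 * δ / 4 →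
        ‖iteratedFDeriv ℝ j
            (fun y : EuclideanSpace ℝ (Fin n) =>
              (μ ^ 2 + (cnk n k)⁻¹ * ‖y‖ ^ 2) ^ (((2 * k : ℝ) - n) / 2) -
                cnk n k ^ (((n : ℝ) - 2 * k) / 2) * ‖y‖ ^ ((2 * k : ℝ) - n)) x‖ ≤
          C * δ ^ (-(j : ℝ)) := by
  have hn1 : (2 * (k:ℝ) + 1) ≤ n := by exact_mod_cast h1
  have hn2 : (n:ℝ) ≤ 2 * k + 3 := by exact_mod_cast h2
  have hc : 0 < cnk n k := by
    apply Real.rpow_pos_of_pos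
    apply Finset.prod_pos
    intro l hl
    have hl0 : (0:ℝ) ≤ (l:ℝ) := Nat.cast_nonneg l
    linarith
  set c : ℝ := cnk n k with hcdef
  have h4c : (0:ℝ) < 4 * c := by linarith
  obtain ⟨p, hpdef⟩ : ∃ p : ℝ, p = ((2 * k : ℝ) - n) / 2 := ⟨_, rfl⟩
  have hp1 : p ≤ -(1/2) := by rw [hpdef]; linarith
  have hp2 : -(3/2) ≤ p := by rw [hpdef]; linarith
  have hpneg : p < 0 := lt_of_le_of_lt hp1 (by norm_num)
  set K : ℕ → ℝ := fun i =>
    (∏ l ∈ Finset.range i, (-p + l)) * (c⁻¹) ^ i * (-p + i) * (4 * c) ^ (-p + i + 1 : ℝ)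
    with hKdef
  have hKpos : ∀ i, 0 < K i := by
    intro i
    have hi0 : (0:ℝ) ≤ i := Nat.cast_nonneg i
    apply mul_pos
    apply mul_pos
    apply mul_pos
    · exact Finset.prod_pos fun l _ => by
        have : (0:ℝ) ≤ l := Nat.cast_nonneg l; linarith
    · positivity
    · linarith
    · exact Real.rpow_pos_of_pos h4c _
  have hne : (Finset.range (2*k+1)).Nonempty := ⟨0, Finset.mem_range.2 (by omega)⟩
  set C₁ : ℝ := (Finset.range (2*k+1)).sup' hne K with hC₁def
  have hKC₁ : ∀ i, i ≤ 2*k → K i ≤ C₁ := fun i hi =>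
    Finset.le_sup' K (Finset.mem_range.2 (by omega))
  have hC₁0 : 0 ≤ C₁ := le_trans (hKpos 0).le (hKC₁ 0 (by omega))
  set C₂ : ℝ := (c⁻¹) ^ 3 * C₁ + 1 with hC₂def
  have hC₂ : 0 < C₂ := by positivity
  refine ⟨((2*k).factorial : ℝ) * C₂ * 5 ^ (2*k), by positivity, ?_⟩
  intro δ μ hδ0 hδ1 hμ0 hμ j hj x hx1 hx2
  set ν : ℝ := μ / δ with hνdef
  have hν0 : 0 < ν := div_pos hμ0 hδ0
  have hcinv3 : c ^ (-(3:ℝ)) = (c⁻¹)^3 := by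
    rw [show (-(3:ℝ)) = -((3:ℕ):ℝ) by norm_num, Real.rpow_neg hc.le, Real.rpow_natCast, inv_pow]
  have hν2 : δ ^ (2*p) * ν^2 ≤ (c⁻¹)^3 := by
    have hν1 : ν ≤ c ^ (-(3/2:ℝ)) * δ^2 := by
      rw [hνdef, div_le_iff₀ hδ0]
      calc μ ≤ c ^ (-(3/2:ℝ)) * δ^3 := hμ
        _ = c ^ (-(3/2:ℝ)) * δ^2 * δ := by ring
    have hsq : (c ^ (-(3/2:ℝ)))^2 = (c⁻¹)^3 := by
      rw [← Real.rpow_natCast (c ^ (-(3/2:ℝ))) 2, ← Real.rpow_mul hc.le,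
        show (-(3/2:ℝ)) * ((2:ℕ):ℝ) = -(3:ℝ) by norm_num, hcinv3]
    have hν2' : ν^2 ≤ (c⁻¹)^3 * δ^4 := by
      calc ν^2 = ν * ν := sq ν
        _ ≤ (c ^ (-(3/2:ℝ)) * δ^2) * (c ^ (-(3/2:ℝ)) * δ^2) :=
            mul_le_mul hν1 hν1 hν0.le (by positivity)
        _ = (c ^ (-(3/2:ℝ)))^2 * δ^4 := by ring
        _ = (c⁻¹)^3 * δ^4 := by rw [hsq]
    calc δ^(2*p) * ν^2 ≤ δ^(2*p) * ((c⁻¹)^3 * δ^4) :=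
          mul_le_mul_of_nonneg_left hν2' (Real.rpow_nonneg hδ0.le _)
      _ = (c⁻¹)^3 * (δ^(2*p) * δ^((4:ℕ):ℝ)) := by rw [Real.rpow_natCast δ 4]; ring
      _ = (c⁻¹)^3 * δ^(2*p + ((4:ℕ):ℝ)) := by rw [← Real.rpow_add hδ0]
      _ ≤ (c⁻¹)^3 * 1 := by
          refine mul_le_mul_of_nonneg_left ?_ (by positivity)
          refine Real.rpow_le_one hδ0.le hδ1.le ?_
          push_cast
          linarith
      _ = (c⁻¹)^3 := mul_one _
  set s : Set (EuclideanSpace ℝ (Fin n)) :=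
    (fun w : EuclideanSpace ℝ (Fin n) => ‖w‖) ⁻¹' Set.Ioo (1/2 : ℝ) 3 with hsdef
  have hs_open : IsOpen s := isOpen_Ioo.preimage continuous_norm
  set L : EuclideanSpace ℝ (Fin n) →L[ℝ] EuclideanSpace ℝ (Fin n) :=
    δ⁻¹ • ContinuousLinearMap.id ℝ _ with hLdef
  set z : EuclideanSpace ℝ (Fin n) := δ⁻¹ • x with hzdef
  have hLxz : L x = z := rfl
  have hznorm : ‖z‖ = δ⁻¹ * ‖x‖ := by
    rw [hzdef, norm_smul, Real.norm_eq_abs, abs_of_pos (inv_pos.2 hδ0)]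
  have hz_lb : 3/4 ≤ ‖z‖ := by
    rw [hznorm]
    calc (3:ℝ)/4 = δ⁻¹ * (3 * δ / 4) := by field_simp
      _ ≤ δ⁻¹ * ‖x‖ := mul_le_mul_of_nonneg_left hx1 (inv_pos.2 hδ0).le
  have hz_ub : ‖z‖ ≤ 9/4 := by
    rw [hznorm]
    calc δ⁻¹ * ‖x‖ ≤ δ⁻¹ * (9 * δ / 4) := mul_le_mul_of_nonneg_left hx2 (inv_pos.2 hδ0).le
      _ = 9/4 := by field_simp
  have hzs : z ∈ s := by
    simp only [hsdef, Set.mem_preimage, Set.mem_Ioo]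
    constructor <;> linarith
  set q : EuclideanSpace ℝ (Fin n) → ℝ := fun y => ‖y‖ ^ 2 with hqdef
  set G : ℝ → ℝ := fun t => δ ^ (2*p) * ((ν^2 + c⁻¹ * t) ^ p - c ^ (-p) * t ^ p) with hGdef
  set F : EuclideanSpace ℝ (Fin n) → ℝ := fun y =>
    (μ ^ 2 + c⁻¹ * ‖y‖ ^ 2) ^ (((2 * k : ℝ) - n) / 2) -
      c ^ (((n : ℝ) - 2 * k) / 2) * ‖y‖ ^ ((2 * k : ℝ) - n) with hFdef
  have hEq : ∀ w : EuclideanSpace ℝ (Fin n), F (δ • w) = G (‖w‖^2) := by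
    intro w
    rw [hFdef, hGdef]
    simp only
    have hnw : (0:ℝ) ≤ ‖w‖ := norm_nonneg w
    have hw : ‖δ • w‖ = δ * ‖w‖ := by rw [norm_smul, Real.norm_eq_abs, abs_of_pos hδ0]
    rw [hw]
    have e0 : μ ^ 2 + c⁻¹ * (δ * ‖w‖) ^ 2 = δ^2 * (ν^2 + c⁻¹ * ‖w‖^2) := by
      rw [hνdef]; field_simp
    rw [e0]
    have e1 : (δ^2 * (ν^2 + c⁻¹*‖w‖^2)) ^ p = δ^(2*p) * (ν^2 + c⁻¹*‖w‖^2)^p := by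
      rw [Real.mul_rpow (sq_nonneg δ) (by positivity), ← Real.rpow_natCast δ 2,
        ← Real.rpow_mul hδ0.le]
      norm_num
    have e2 : (δ * ‖w‖) ^ ((2 * k : ℝ) - n) = δ^(2*p) * (‖w‖^2)^p := by
      rw [Real.mul_rpow hδ0.le hnw]
      congr 1
      · rw [show (2 * (k:ℝ)) - n = 2*p from by rw [hpdef]; ring]
      · rw [show (2 * (k:ℝ)) - n = ((2:ℕ):ℝ)*p from by rw [hpdef]; push_cast; ring,
          Real.rpow_mul hnw, Real.rpow_natCast]
    rw [show (((2 * k : ℝ) - n) / 2) = p from hpdef.symm, e1, e2,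
      show (((n:ℝ) - 2 * k) / 2) = -p from by rw [hpdef]; ring]
    ring
  have hqC : ContDiff ℝ ((⊤:ℕ∞)) q := contDiff_norm_sq ℝ
  have hmaps : Set.MapsTo q s (Set.Ioi (0:ℝ)) := by
    intro w hw
    simp only [hsdef, Set.mem_preimage, Set.mem_Ioo] at hw
    simp only [hqdef, Set.mem_Ioi]
    nlinarith [hw.1]
  have hGC : ContDiffOn ℝ (⊤:ℕ∞) G (Set.Ioi 0) := by
    intro t ht
    have ht' : (0:ℝ) < t := ht
    have hb : ν^2 + c⁻¹ * t ≠ 0 := by positivity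
    have haff : ContDiffAt ℝ (⊤:ℕ∞) (fun t : ℝ => ν^2 + c⁻¹*t) t := by fun_prop
    have h1 : ContDiffAt ℝ (⊤:ℕ∞) (fun t : ℝ => (ν^2 + c⁻¹*t)^p) t :=
      ContDiffAt.comp (g := fun x : ℝ => x ^ p) t (Real.contDiffAt_rpow_const_of_ne hb) haff
    have h2 : ContDiffAt ℝ (⊤:ℕ∞) (fun t : ℝ => t^p) t :=
      Real.contDiffAt_rpow_const_of_ne ht'.ne'
    have hG' : ContDiffAt ℝ (⊤:ℕ∞)
        (fun t : ℝ => δ ^ (2*p) * ((ν^2 + c⁻¹ * t) ^ p - c ^ (-p) * t ^ p)) t :=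
      contDiffAt_const.mul (h1.sub (contDiffAt_const.mul h2))
    rw [hGdef]
    exact hG'.contDiffWithinAt
  have hGq : ContDiffOn ℝ (⊤:ℕ∞) (G ∘ q) s := hGC.comp hqC.contDiffOn hmaps
  have hh : ContDiffOn ℝ (⊤:ℕ∞) (fun w : EuclideanSpace ℝ (Fin n) => F (δ • w)) s :=
    hGq.congr fun w _ => hEq w
  -- bound on derivatives of G
  have htq : q z ∈ Set.Ioi (0:ℝ) := hmaps hzs
  have htlb : 1/4 ≤ q z := by
    have h9 : (3/4:ℝ)*(3/4) ≤ ‖z‖ * ‖z‖ :=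
      mul_le_mul hz_lb hz_lb (by norm_num) (norm_nonneg z)
    have hq2 : q z = ‖z‖ * ‖z‖ := by simp only [hqdef]; ring
    rw [hq2]
    linarith
  have hC : ∀ i, i ≤ j → ‖iteratedFDerivWithin ℝ i G (Set.Ioi 0) (q z)‖ ≤ C₂ := by
    intro i hij
    have hi2k : i ≤ 2*k := le_trans hij hj
    have hi0 : (0:ℝ) ≤ i := Nat.cast_nonneg i
    rw [norm_iteratedFDerivWithin_eq_norm_iteratedDerivWithin, Real.norm_eq_abs]
    have hform := iterDeriv_formula (δ ^ (2*p)) (ν^2) c⁻¹ (c ^ (-p)) p (sq_nonneg ν)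
      (inv_pos.2 hc) i (q z) htq
    rw [hGdef, hform]
    set t : ℝ := q z with htdef
    have ht0 : (0:ℝ) < t := htq
    have hBpos : (0:ℝ) < c⁻¹ * t := by positivity
    have hq_neg : p - (i:ℝ) < 0 := by linarith
    have hA : c⁻¹^i * (c⁻¹*t)^(p-(i:ℝ)) = c^(-p) * t^(p-(i:ℝ)) := by
      rw [Real.mul_rpow (inv_pos.2 hc).le ht0.le, ← mul_assoc, ← Real.rpow_natCast c⁻¹ i,
        ← Real.rpow_add (inv_pos.2 hc), show (i:ℝ) + (p - i) = p from by ring,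
        Real.inv_rpow hc.le, ← Real.rpow_neg hc.le]
    have hinner : c⁻¹^i * (ν^2 + c⁻¹*t)^(p - (i:ℝ)) - c^(-p) * t^(p - (i:ℝ))
        = c⁻¹^i * ((ν^2 + c⁻¹*t)^(p-(i:ℝ)) - (c⁻¹*t)^(p-(i:ℝ))) := by
      rw [mul_sub, hA]
    have hmvt := abs_rpow_sub_rpow_le (ν^2) (c⁻¹*t) (p - (i:ℝ)) (sq_nonneg ν) hBpos hq_neg
    have habs_pi : |p - (i:ℝ)| = -p + i := by rw [abs_of_nonpos hq_neg.le]; ring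
    have hble : (4*c)⁻¹ ≤ c⁻¹ * t := by
      calc (4*c)⁻¹ = c⁻¹ * (1/4) := by rw [mul_inv]; ring
        _ ≤ c⁻¹ * t := mul_le_mul_of_nonneg_left htlb (inv_pos.2 hc).le
    have hbpow : (c⁻¹*t)^(p - (i:ℝ) - 1) ≤ (4*c)^(-p + (i:ℝ) + 1) := by
      have h := Real.rpow_le_rpow_of_nonpos (z := p - (i:ℝ) - 1) (inv_pos.2 h4c) hble (by linarith)
      rwa [Real.inv_rpow h4c.le, ← Real.rpow_neg h4c.le,
        show -(p - (i:ℝ) - 1) = -p + i + 1 from by ring] at h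
    have hprod_nonneg : 0 ≤ ∏ l ∈ Finset.range i, (-p + (l:ℝ)) :=
      Finset.prod_nonneg fun l _ => by
        have : (0:ℝ) ≤ l := Nat.cast_nonneg l; linarith
    rw [hinner, abs_mul, abs_mul, abs_mul,
      abs_of_pos (Real.rpow_pos_of_pos hδ0 _), Finset.abs_prod,
      abs_of_nonneg (pow_nonneg (inv_pos.2 hc).le i)]
    have hprod_eq : (∏ l ∈ Finset.range i, |p - (l:ℝ)|) = ∏ l ∈ Finset.range i, (-p + l) :=
      Finset.prod_congr rfl fun l _ => by
        rw [abs_of_nonpos (by have : (0:ℝ) ≤ l := Nat.cast_nonneg l; linarith)]; ring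
    rw [hprod_eq]
    calc δ^(2*p) * (∏ l ∈ Finset.range i, (-p + (l:ℝ))) *
          (c⁻¹^i * |(ν^2 + c⁻¹*t)^(p-(i:ℝ)) - (c⁻¹*t)^(p-(i:ℝ))|)
        ≤ δ^(2*p) * (∏ l ∈ Finset.range i, (-p + (l:ℝ))) *
          (c⁻¹^i * ((-p + i) * ((4*c)^(-p + (i:ℝ) + 1) * ν^2))) := by
          refine mul_le_mul_of_nonneg_left
            (mul_le_mul_of_nonneg_left ?_ (pow_nonneg (inv_pos.2 hc).le i))
            (mul_nonneg (Real.rpow_nonneg hδ0.le _) hprod_nonneg)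
          calc |(ν^2 + c⁻¹*t)^(p-(i:ℝ)) - (c⁻¹*t)^(p-(i:ℝ))|
              ≤ |p - (i:ℝ)| * (c⁻¹*t)^(p-(i:ℝ)-1) * ν^2 := hmvt
            _ = (-p + i) * (c⁻¹*t)^(p-(i:ℝ)-1) * ν^2 := by rw [habs_pi]
            _ ≤ (-p + i) * (4*c)^(-p + (i:ℝ) + 1) * ν^2 :=
                mul_le_mul_of_nonneg_right
                  (mul_le_mul_of_nonneg_left hbpow (by linarith)) (sq_nonneg ν)
            _ = (-p + i) * ((4*c)^(-p + (i:ℝ) + 1) * ν^2) := by ring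
      _ = (δ^(2*p) * ν^2) * K i := by rw [hKdef]; ring
      _ ≤ (c⁻¹)^3 * C₁ :=
          mul_le_mul hν2 (hKC₁ i hi2k) (hKpos i).le (by positivity)
      _ ≤ C₂ := by rw [hC₂def]; linarith
  have hD : ∀ i, 1 ≤ i → i ≤ j → ‖iteratedFDerivWithin ℝ i q s z‖ ≤ (5:ℝ) ^ i := by
    intro i h1i _
    rw [iteratedFDerivWithin_of_isOpen i hs_open hzs]
    exact qbound z hz_ub i h1i
  have hmain : ‖iteratedFDerivWithin ℝ j
      (fun w : EuclideanSpace ℝ (Fin n) => F (δ • w)) s z‖ ≤ (j.factorial : ℝ) * C₂ * 5 ^ j := by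
    rw [iteratedFDerivWithin_congr (fun w _ => hEq w) hzs j]
    exact norm_iteratedFDerivWithin_comp_le hGC hqC.contDiffOn (by exact_mod_cast le_top)
      (uniqueDiffOn_Ioi 0) hs_open.uniqueDiffOn hmaps hzs hC hD
  have hSopen : IsOpen (⇑L ⁻¹' s) := hs_open.preimage L.continuous
  have hxS : x ∈ ⇑L ⁻¹' s := by
    simp only [Set.mem_preimage]
    rw [hLxz]; exact hzs
  have hfh : F = (fun w : EuclideanSpace ℝ (Fin n) => F (δ • w)) ∘ ⇑L := by
    funext y
    simp only [Function.comp, hLdef, ContinuousLinearMap.smul_apply,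
      ContinuousLinearMap.id_apply]
    rw [smul_smul, mul_inv_cancel₀ (ne_of_gt hδ0), one_smul]
  have hLnorm : ‖L‖ ≤ δ⁻¹ := by
    refine ContinuousLinearMap.opNorm_le_bound _ (inv_pos.2 hδ0).le fun y => ?_
    have hy : L y = δ⁻¹ • y := rfl
    rw [hy, norm_smul, Real.norm_eq_abs, abs_of_pos (inv_pos.2 hδ0)]
  have step1 : iteratedFDeriv ℝ j F x =
      (iteratedFDerivWithin ℝ j (fun w : EuclideanSpace ℝ (Fin n) => F (δ • w)) s z
        ).compContinuousLinearMap (fun _ => L) := by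
    rw [← iteratedFDerivWithin_of_isOpen (f := F) j hSopen hxS]
    conv_lhs => rw [hfh]
    rw [L.iteratedFDerivWithin_comp_right hh hs_open.uniqueDiffOn hSopen.uniqueDiffOn
      (by rw [hLxz]; exact hzs) (by exact_mod_cast le_top), hLxz]
  have hrpow : δ ^ (-(j:ℝ)) = (δ⁻¹)^j := by
    rw [Real.rpow_neg hδ0.le, Real.rpow_natCast, inv_pow]
  calc ‖iteratedFDeriv ℝ j F x‖
      ≤ ‖iteratedFDerivWithin ℝ j (fun w : EuclideanSpace ℝ (Fin n) => F (δ • w)) s z‖ *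
        (δ⁻¹)^j := by
        rw [step1]
        refine (ContinuousMultilinearMap.norm_compContinuousLinearMap_le _ _).trans ?_
        refine mul_le_mul_of_nonneg_left ?_ (norm_nonneg _)
        calc (∏ _i : Fin j, ‖L‖) = ‖L‖ ^ j := by
              rw [Finset.prod_const, Finset.card_univ, Fintype.card_fin]
          _ ≤ (δ⁻¹)^j := pow_le_pow_left₀ (norm_nonneg L) hLnorm j
    _ ≤ ((j.factorial : ℝ) * C₂ * 5 ^ j) * (δ⁻¹)^j :=
        mul_le_mul_of_nonneg_right hmain (by positivity)
    _ ≤ (((2*k).factorial : ℝ) * C₂ * 5 ^ (2*k)) * (δ⁻¹)^j := by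
        refine mul_le_mul_of_nonneg_right ?_ (by positivity)
        have hf1 : (j.factorial : ℝ) ≤ ((2*k).factorial : ℝ) := by
          exact_mod_cast Nat.factorial_le hj
        have hf2 : (5:ℝ)^j ≤ 5^(2*k) := pow_le_pow_right₀ (by norm_num) hj
        have := mul_le_mul (mul_le_mul_of_nonneg_right hf1 hC₂.le) hf2 (by positivity)
          (by positivity)
        exact this
    _ = (((2*k).factorial : ℝ) * C₂ * 5^(2*k)) * δ ^ (-(j:ℝ)) := by rw [hrpow]
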